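/- Under the structural assumptions pG(t) ≤ tg(t) ≤ qG(t) (1 < p ≤ q), with c = p^{1/(q−1)}/q^{1/(p−1)}, for λ ≥ 1 and t ≥ 0: c·λ^{1/(q−1)}·g⁻¹(t) ≤ g⁻¹(λt) ≤ c⁻¹·λ^{1/(p−1)}·g⁻¹(t). -/

import Mathlib

open Real Set MeasureTheory intervalIntegral Filter in
/-- Under `pG(t) ≤ tg(t) ≤ qG(t)` (`1 < p ≤ q`), with `c = p^{1/(q−1)}/q^{1/(p−1)}`,
for `λ ≥ 1` and `t ≥ 0`:
`c·λ^{1/(q−1)}·g⁻¹(t) ≤ g⁻¹(λt) ≤ c⁻¹·λ^{1/(p−1)}·g⁻¹(t)`. -/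
theorem stmt_12 (g G ginv : ℝ → ℝ) (p q : ℝ) (hp : 1 < p) (hpq : p ≤ q)
    (hg_mono : StrictMonoOn g (Set.Ici (0:ℝ)))
    (hg_cont : ContinuousOn g (Set.Ici (0:ℝ)))
    (hg_nonneg : ∀ x, 0 ≤ x → 0 ≤ g x)
    (hG : ∀ t, G t = ∫ τ in (0:ℝ)..t, g τ)
    (hpG : ∀ t, 0 ≤ t → p * G t ≤ t * g t)
    (hqG : ∀ t, 0 ≤ t → t * g t ≤ q * G t)
    (hinv_left : ∀ t, 0 ≤ t → ginv (g t) = t)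
    (hinv_right : ∀ t, 0 ≤ t → g (ginv t) = t)
    (hinv_nonneg : ∀ t, 0 ≤ t → 0 ≤ ginv t) :
    ∀ l t : ℝ, 1 ≤ l → 0 ≤ t →
      (p ^ (1 / (q - 1)) / q ^ (1 / (p - 1))) * l ^ (1 / (q - 1)) * ginv t ≤ ginv (l * t) ∧
      ginv (l * t) ≤ (p ^ (1 / (q - 1)) / q ^ (1 / (p - 1)))⁻¹ * l ^ (1 / (p - 1)) * ginv t := by
  have hq : 1 < q := lt_of_lt_of_le hp hpq
  have hp0 : (0:ℝ) < p := lt_trans one_pos hp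
  have hq0 : (0:ℝ) < q := lt_trans one_pos hq
  have hp1 : (0:ℝ) < p - 1 := by linarith
  have hq1 : (0:ℝ) < q - 1 := by linarith
  -- integrability of g on [0, y]
  have hgint : ∀ y : ℝ, 0 ≤ y → IntervalIntegrable g volume 0 y := by
    intro y hy
    apply ContinuousOn.intervalIntegrable
    apply hg_cont.mono
    rw [uIcc_of_le hy]
    exact Icc_subset_Ici_self
  -- derivative of G
  have hGder : ∀ y : ℝ, 0 < y → HasDerivAt G (g y) y := by
    intro y hy
    have hcont : ContinuousAt g y := (hg_cont y hy.le).continuousAt (Ici_mem_nhds hy)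
    have hmeas : StronglyMeasurableAtFilter g (nhds y) :=
      (hg_cont.mono (Ioi_subset_Ici_self)).stronglyMeasurableAtFilter
        isOpen_Ioi (μ := volume) y hy
    have h := intervalIntegral.integral_hasDerivAt_right (hgint y hy.le) hmeas hcont
    have hGeq : G = fun x => ∫ τ in (0:ℝ)..x, g τ := funext hG
    rw [hGeq]
    exact h
  -- g 0 = 0
  have hg0 : g 0 = 0 := by
    have key : ∀ t : ℝ, 0 < t → p * g 0 ≤ g t := by
      intro t ht
      have hGt : t * g 0 ≤ G t := by
        rw [hG t]
        have := intervalIntegral.integral_mono_on ht.le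
          (_root_.intervalIntegrable_const (c := g 0)) (hgint t ht.le)
          (fun x hx => (hg_mono.monotoneOn (le_refl (0:ℝ)) hx.1 hx.1))
        simpa using this
      have := hpG t ht.le
      have h2 : p * (t * g 0) ≤ t * g t := le_trans (by nlinarith [hg_nonneg 0 le_rfl]) this
      nlinarith
    have hlim : Filter.Tendsto g (nhdsWithin 0 (Set.Ioi 0)) (nhds (g 0)) :=
      (hg_cont 0 (le_refl (0:ℝ))).mono_left (nhdsWithin_mono 0 Ioi_subset_Ici_self)
    have h3 : p * g 0 ≤ g 0 := by
      apply ge_of_tendsto hlim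
      filter_upwards [self_mem_nhdsWithin] with t ht
      exact key t ht
    nlinarith [hg_nonneg 0 le_rfl]
  -- Gronwall-type upper bound : G (s t) ≤ s^q G t
  have hGup : ∀ t : ℝ, 0 < t → ∀ s : ℝ, 1 ≤ s → G (s * t) ≤ s ^ q * G t := by
    intro t ht s hs
    set F : ℝ → ℝ := fun x => x ^ (-q) * G (x * t) with hF
    have hder : ∀ x ∈ Set.Ioi (1:ℝ),
        HasDerivAt F (x ^ (-q-1) * (x * t * g (x * t) - q * G (x * t))) x := by
      intro x hx
      have hx0 : (0:ℝ) < x := lt_trans one_pos hx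
      have hxt : 0 < x * t := mul_pos hx0 ht
      have h1 : HasDerivAt (fun x : ℝ => x ^ (-q)) (-q * x ^ (-q-1)) x :=
        Real.hasDerivAt_rpow_const (Or.inl hx0.ne')
      have h2 : HasDerivAt (fun x : ℝ => G (x * t)) (g (x * t) * t) x := by
        have := (hGder (x * t) hxt).comp x ((hasDerivAt_id x).mul_const t)
        rw [one_mul] at this
        exact this
      have h3 : HasDerivAt (fun x : ℝ => x ^ (-q) * G (x * t))
          (-q * x ^ (-q-1) * G (x * t) + x ^ (-q) * (g (x * t) * t)) x := h1.mul h2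
      convert h3 using 1
      have hxq : x ^ (-q) = x ^ (-q-1) * x := by
        rw [← Real.rpow_add_one hx0.ne']
        ring_nf
      rw [hxq]; ring
    have hcont : ContinuousOn F (Set.Ici (1:ℝ)) := by
      apply ContinuousOn.mul
      · exact continuousOn_id.rpow_const (fun x hx => Or.inl (by
          have : (1:ℝ) ≤ x := hx
          positivity))
      · intro x hx
        have hxt : 0 < x * t := mul_pos (lt_of_lt_of_le one_pos hx) ht
        have h : ContinuousAt (fun x : ℝ => G (x * t)) x :=
          ContinuousAt.comp (hGder (x*t) hxt).continuousAt (continuousAt_id.mul continuousAt_const)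
        exact h.continuousWithinAt
    have hanti : AntitoneOn F (Set.Ici (1:ℝ)) := by
      apply antitoneOn_of_deriv_nonpos (convex_Ici 1) hcont
      · intro x hx
        rw [interior_Ici] at hx
        exact (hder x hx).differentiableAt.differentiableWithinAt
      · intro x hx
        rw [interior_Ici] at hx
        rw [(hder x hx).deriv]
        have hx0 : (0:ℝ) < x := lt_trans one_pos hx
        have hxt : (0:ℝ) ≤ x * t := (mul_pos hx0 ht).le
        have := hqG (x * t) hxt
        have hpow : (0:ℝ) < x ^ (-q-1) := Real.rpow_pos_of_pos hx0 _
        nlinarith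
    have h1 : F s ≤ F 1 := hanti (le_refl (1:ℝ) : (1:ℝ) ∈ Set.Ici 1) hs hs
    have hF1 : F 1 = G t := by simp [hF]
    have hs0 : (0:ℝ) < s := lt_of_lt_of_le one_pos hs
    have hFs : F s = s ^ (-q) * G (s * t) := rfl
    have hkey : s ^ (-q) * G (s * t) ≤ G t := by rw [← hFs, ← hF1]; exact h1
    have hq0' : (0:ℝ) < s ^ q := Real.rpow_pos_of_pos hs0 _
    have hneg : s ^ (-q) = (s ^ q)⁻¹ := Real.rpow_neg hs0.le q
    rw [hneg] at hkey
    calc G (s*t) = s ^ q * ((s ^ q)⁻¹ * G (s * t)) := by field_simp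
      _ ≤ s ^ q * G t := by apply mul_le_mul_of_nonneg_left hkey hq0'.le
  -- Gronwall-type lower bound : s^p G t ≤ G (s t)
  have hGlo : ∀ t : ℝ, 0 < t → ∀ s : ℝ, 1 ≤ s → s ^ p * G t ≤ G (s * t) := by
    intro t ht s hs
    set F : ℝ → ℝ := fun x => x ^ (-p) * G (x * t) with hF
    have hder : ∀ x ∈ Set.Ioi (1:ℝ),
        HasDerivAt F (x ^ (-p-1) * (x * t * g (x * t) - p * G (x * t))) x := by
      intro x hx
      have hx0 : (0:ℝ) < x := lt_trans one_pos hx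
      have hxt : 0 < x * t := mul_pos hx0 ht
      have h1 : HasDerivAt (fun x : ℝ => x ^ (-p)) (-p * x ^ (-p-1)) x :=
        Real.hasDerivAt_rpow_const (Or.inl hx0.ne')
      have h2 : HasDerivAt (fun x : ℝ => G (x * t)) (g (x * t) * t) x := by
        have := (hGder (x * t) hxt).comp x ((hasDerivAt_id x).mul_const t)
        rw [one_mul] at this
        exact this
      have h3 : HasDerivAt (fun x : ℝ => x ^ (-p) * G (x * t))
          (-p * x ^ (-p-1) * G (x * t) + x ^ (-p) * (g (x * t) * t)) x := h1.mul h2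
      convert h3 using 1
      have hxq : x ^ (-p) = x ^ (-p-1) * x := by
        rw [← Real.rpow_add_one hx0.ne']
        ring_nf
      rw [hxq]; ring
    have hcont : ContinuousOn F (Set.Ici (1:ℝ)) := by
      apply ContinuousOn.mul
      · exact continuousOn_id.rpow_const (fun x hx => Or.inl (by
          have : (1:ℝ) ≤ x := hx
          positivity))
      · intro x hx
        have hxt : 0 < x * t := mul_pos (lt_of_lt_of_le one_pos hx) ht
        have h : ContinuousAt (fun x : ℝ => G (x * t)) x :=
          ContinuousAt.comp (hGder (x*t) hxt).continuousAt (continuousAt_id.mul continuousAt_const)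
        exact h.continuousWithinAt
    have hmono : MonotoneOn F (Set.Ici (1:ℝ)) := by
      apply monotoneOn_of_deriv_nonneg (convex_Ici 1) hcont
      · intro x hx
        rw [interior_Ici] at hx
        exact (hder x hx).differentiableAt.differentiableWithinAt
      · intro x hx
        rw [interior_Ici] at hx
        rw [(hder x hx).deriv]
        have hx0 : (0:ℝ) < x := lt_trans one_pos hx
        have hxt : (0:ℝ) ≤ x * t := (mul_pos hx0 ht).le
        have := hpG (x * t) hxt
        have hpow : (0:ℝ) < x ^ (-p-1) := Real.rpow_pos_of_pos hx0 _
        nlinarith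
    have h1 : F 1 ≤ F s := hmono (le_refl (1:ℝ) : (1:ℝ) ∈ Set.Ici 1) hs hs
    have hF1 : F 1 = G t := by simp [hF]
    have hs0 : (0:ℝ) < s := lt_of_lt_of_le one_pos hs
    have hFs : F s = s ^ (-p) * G (s * t) := rfl
    have hkey : G t ≤ s ^ (-p) * G (s * t) := by rw [← hFs, ← hF1]; exact h1
    have hp0' : (0:ℝ) < s ^ p := Real.rpow_pos_of_pos hs0 _
    have hneg : s ^ (-p) = (s ^ p)⁻¹ := Real.rpow_neg hs0.le p
    rw [hneg] at hkey
    calc s ^ p * G t ≤ s ^ p * ((s ^ p)⁻¹ * G (s * t)) := by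
          apply mul_le_mul_of_nonneg_left hkey hp0'.le
      _ = G (s * t) := by field_simp
  -- scaling bounds on g
  have hgb : ∀ t : ℝ, 0 ≤ t → ∀ s : ℝ, 1 ≤ s →
      g (s * t) ≤ (q / p) * s ^ (q - 1) * g t ∧ (p / q) * s ^ (p - 1) * g t ≤ g (s * t) := by
    intro t ht s hs
    have hs0 : (0:ℝ) < s := lt_of_lt_of_le one_pos hs
    rcases eq_or_lt_of_le ht with h0 | ht
    · rw [← h0]
      simp [hg0]
    have hst : (0:ℝ) < s * t := mul_pos hs0 ht
    have hsq : s ^ q = s * s ^ (q - 1) := by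
      nth_rewrite 1 [show q = 1 + (q - 1) by ring]
      rw [Real.rpow_add hs0, Real.rpow_one]
    have hsp : s ^ p = s * s ^ (p - 1) := by
      nth_rewrite 1 [show p = 1 + (p - 1) by ring]
      rw [Real.rpow_add hs0, Real.rpow_one]
    constructor
    · have h1 : s * t * g (s * t) ≤ q * G (s * t) := hqG _ hst.le
      have h2 : G (s * t) ≤ s ^ q * G t := hGup t ht s hs
      have h3 : p * G t ≤ t * g t := hpG t ht.le
      have hGt : G t ≤ t * g t / p := by rw [le_div_iff₀ hp0]; linarith
      have h4 : s * t * g (s * t) ≤ q * (s ^ q * (t * g t / p)) := by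
        calc s * t * g (s * t) ≤ q * G (s * t) := h1
          _ ≤ q * (s ^ q * G t) := by gcongr
          _ ≤ q * (s ^ q * (t * g t / p)) := by gcongr
      have h5 : q * (s ^ q * (t * g t / p)) = ((q / p) * s ^ (q - 1) * g t) * (s * t) := by
        rw [hsq]; field_simp
      rw [h5] at h4
      have h4' : g (s * t) * (s * t) ≤ ((q / p) * s ^ (q - 1) * g t) * (s * t) := by
        linear_combination h4
      exact le_of_mul_le_mul_right h4' hst
    · have h1 : p * G (s * t) ≤ s * t * g (s * t) := hpG _ hst.le
      have h2 : s ^ p * G t ≤ G (s * t) := hGlo t ht s hs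
      have h3 : t * g t ≤ q * G t := hqG t ht.le
      have hGt : t * g t / q ≤ G t := by rw [div_le_iff₀ hq0]; linarith
      have h4 : p * (s ^ p * (t * g t / q)) ≤ s * t * g (s * t) := by
        calc p * (s ^ p * (t * g t / q)) ≤ p * (s ^ p * G t) := by gcongr
          _ ≤ p * G (s * t) := by gcongr
          _ ≤ s * t * g (s * t) := h1
      have h5 : p * (s ^ p * (t * g t / q)) = ((p / q) * s ^ (p - 1) * g t) * (s * t) := by
        rw [hsp]; field_simp
      rw [h5] at h4
      have h4' : ((p / q) * s ^ (p - 1) * g t) * (s * t) ≤ g (s * t) * (s * t) := by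
        linear_combination h4
      exact le_of_mul_le_mul_right h4' hst
  -- monotonicity of ginv
  have hginv_mono : ∀ a b : ℝ, 0 ≤ a → a ≤ b → ginv a ≤ ginv b := by
    intro a b ha hab
    by_contra h
    push_neg at h
    have hb : (0:ℝ) ≤ b := le_trans ha hab
    have := hg_mono (hinv_nonneg b hb) (hinv_nonneg a ha) h
    rw [hinv_right a ha, hinv_right b hb] at this
    linarith
  -- the constant c
  set c : ℝ := p ^ (1 / (q - 1)) / q ^ (1 / (p - 1)) with hc
  have hppos : (0:ℝ) < p ^ (1 / (q - 1)) := Real.rpow_pos_of_pos hp0 _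
  have hqpos : (0:ℝ) < q ^ (1 / (p - 1)) := Real.rpow_pos_of_pos hq0 _
  have hc_pos : 0 < c := div_pos hppos hqpos
  have hc_le_one : c ≤ 1 := by
    rw [hc, div_le_one hqpos]
    calc p ^ (1 / (q - 1)) ≤ p ^ (1 / (p - 1)) :=
          Real.rpow_le_rpow_of_exponent_le hp.le
            (one_div_le_one_div_of_le hp1 (by linarith))
      _ ≤ q ^ (1 / (p - 1)) := Real.rpow_le_rpow hp0.le hpq (by positivity)
  have hcq : c ^ (q - 1) = p / q ^ ((1 / (p - 1)) * (q - 1)) := by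
    rw [hc, Real.div_rpow hppos.le hqpos.le, ← Real.rpow_mul hp0.le, ← Real.rpow_mul hq0.le,
      one_div_mul_cancel (ne_of_gt hq1), Real.rpow_one]
  intro l t hl ht
  have hl0 : (0:ℝ) < l := lt_of_lt_of_le one_pos hl
  have hu0 : 0 ≤ ginv t := hinv_nonneg t ht
  set u : ℝ := ginv t with hu
  have hgu : g u = t := hinv_right t ht
  constructor
  · -- lower bound
    set s₁ : ℝ := c * l ^ (1 / (q - 1)) with hs₁
    have hs₁0 : 0 < s₁ := mul_pos hc_pos (Real.rpow_pos_of_pos hl0 _)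
    rcases le_total s₁ 1 with hcase | hcase
    · have h1 : s₁ * u ≤ u := by nlinarith
      have h2 : ginv t ≤ ginv (l * t) :=
        hginv_mono t (l * t) ht (le_mul_of_one_le_left ht hl)
      calc c * l ^ (1 / (q - 1)) * ginv t = s₁ * u := rfl
        _ ≤ u := h1
        _ ≤ ginv (l * t) := h2
    · have hb := (hgb u hu0 s₁ hcase).1
      have hs₁q : s₁ ^ (q - 1) = c ^ (q - 1) * l := by
        rw [hs₁, Real.mul_rpow hc_pos.le (Real.rpow_pos_of_pos hl0 _).le,
          ← Real.rpow_mul hl0.le, one_div_mul_cancel (ne_of_gt hq1), Real.rpow_one]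
      have hkey : (q / p) * c ^ (q - 1) ≤ 1 := by
        rw [hcq]
        have hE : q ≤ q ^ ((1 / (p - 1)) * (q - 1)) := by
          nth_rewrite 1 [← Real.rpow_one q]
          apply Real.rpow_le_rpow_of_exponent_le hq.le
          rw [one_div_mul_eq_div, le_div_iff₀ hp1]
          linarith
        have hEpos : (0:ℝ) < q ^ ((1 / (p - 1)) * (q - 1)) := Real.rpow_pos_of_pos hq0 _
        rw [div_mul_div_comm, div_le_one (by positivity)]
        nlinarith
      have h3 : g (s₁ * u) ≤ l * t := by
        rw [hs₁q] at hb
        calc g (s₁ * u) ≤ (q / p) * (c ^ (q - 1) * l) * g u := hb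
          _ = ((q / p) * c ^ (q - 1)) * (l * t) := by rw [hgu]; ring
          _ ≤ 1 * (l * t) := by
              apply mul_le_mul_of_nonneg_right hkey (by positivity)
          _ = l * t := one_mul _
      have h4 := hginv_mono (g (s₁ * u)) (l * t) (hg_nonneg _ (by positivity)) h3
      rw [hinv_left (s₁ * u) (by positivity)] at h4
      calc c * l ^ (1 / (q - 1)) * ginv t = s₁ * u := rfl
        _ ≤ ginv (l * t) := h4
  · -- upper bound
    set s₂ : ℝ := c⁻¹ * l ^ (1 / (p - 1)) with hs₂
    have hcinv : 1 ≤ c⁻¹ := (one_le_inv₀ hc_pos).mpr hc_le_one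
    have hlr : 1 ≤ l ^ (1 / (p - 1)) := Real.one_le_rpow hl (by positivity)
    have hs₂1 : 1 ≤ s₂ := by nlinarith
    have hb := (hgb u hu0 s₂ hs₂1).2
    have hcp : c ^ (p - 1) = p ^ ((1 / (q - 1)) * (p - 1)) / q := by
      rw [hc, Real.div_rpow hppos.le hqpos.le, ← Real.rpow_mul hp0.le, ← Real.rpow_mul hq0.le,
        one_div_mul_cancel (ne_of_gt hp1), Real.rpow_one]
    have hcppos : (0:ℝ) < c ^ (p - 1) := Real.rpow_pos_of_pos hc_pos _
    have hs₂p : s₂ ^ (p - 1) = (c ^ (p - 1))⁻¹ * l := by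
      rw [hs₂, Real.mul_rpow (by positivity) (Real.rpow_pos_of_pos hl0 _).le,
        Real.inv_rpow hc_pos.le, ← Real.rpow_mul hl0.le,
        one_div_mul_cancel (ne_of_gt hp1), Real.rpow_one]
    have hkey : 1 ≤ (p / q) * (c ^ (p - 1))⁻¹ := by
      have hle : c ^ (p - 1) ≤ p / q := by
        rw [hcp]
        have hpe : p ^ ((1 / (q - 1)) * (p - 1)) ≤ p := by
          conv_rhs => rw [← Real.rpow_one p]
          apply Real.rpow_le_rpow_of_exponent_le hp.le
          rw [one_div_mul_eq_div, div_le_one hq1]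
          linarith
        exact (div_le_div_iff_of_pos_right hq0).mpr hpe
      rw [← div_eq_mul_inv, le_div_iff₀ hcppos, one_mul]
      exact hle
    have h3 : l * t ≤ g (s₂ * u) := by
      rw [hs₂p] at hb
      calc l * t = 1 * (l * t) := (one_mul _).symm
        _ ≤ ((p / q) * (c ^ (p - 1))⁻¹) * (l * t) :=
            mul_le_mul_of_nonneg_right hkey (by positivity)
        _ = (p / q) * ((c ^ (p - 1))⁻¹ * l) * g u := by rw [hgu]; ring
        _ ≤ g (s₂ * u) := hb
    have h4 := hginv_mono (l * t) (g (s₂ * u)) (by positivity) h3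
    rw [hinv_left (s₂ * u) (by positivity)] at h4
    calc ginv (l * t) ≤ s₂ * u := h4
      _ = c⁻¹ * l ^ (1 / (p - 1)) * ginv t := rfl
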